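/- Consider the EDMC dynamics on a connected graph G with diameter δ, and let Δ ≥ δ. If x satisfies the EDMC update with Δ + 1 levels, then for every k ≥ Δ + 1 and every vertex i ∈ V, the top-level state equals the (Δ+1)-delayed global maximum of the inputs: x_k(i, Δ) = ū_{k−Δ−1}, where ū_m = max_{j∈V} u_m(j). -/

import Mathlib

open Finset

/-- Under the EDMC update on a connected graph with diameter δ ≤ Δ, for k ≥ Δ+1
the top-level state equals the (Δ+1)-delayed global maximum of the inputs. -/
theorem edmc_top_level_eq_delayed_max
    {V : Type*} [Fintype V] [Nonempty V] [DecidableEq V]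
    (G : SimpleGraph V) [DecidableRel G.Adj] (hconn : G.Connected)
    (δ : ℕ) (hδ : δ = Finset.univ.sup fun p : V × V => G.dist p.1 p.2)
    (Δ : ℕ) (hΔ : δ ≤ Δ)
    (u : ℕ → V → ℝ)
    (x : ℕ → V → Fin (Δ + 1) → ℝ)
    (hx0 : ∀ k i, x (k + 1) i 0 = u k i)
    (hx : ∀ k i (ℓ : Fin Δ), x (k + 1) i ℓ.succ =
      (insert i (G.neighborFinset i)).sup' (insert_nonempty i _)
        (fun j => x k j ℓ.castSucc)) :
    ∀ k, Δ + 1 ≤ k → ∀ i : V,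
      x k i (Fin.last Δ) = Finset.univ.sup' univ_nonempty (u (k - Δ - 1)) := by
  classical
  -- key lemma: level-ℓ state is the ball max
  have key : ∀ ℓ : ℕ, ∀ hℓ : ℓ ≤ Δ, ∀ k : ℕ, ∀ i : V,
      x (k + ℓ + 1) i ⟨ℓ, Nat.lt_succ_of_le hℓ⟩ =
        (univ.filter (fun j => G.dist i j ≤ ℓ)).sup'
          ⟨i, by simp [SimpleGraph.dist_self]⟩ (u k) := by
    intro ℓ
    induction ℓ with
    | zero =>
      intro hℓ k i
      have hi : i ∈ univ.filter (fun j => G.dist i j ≤ 0) := by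
        simp [SimpleGraph.dist_self]
      have hset : (univ.filter (fun j => G.dist i j ≤ 0)).sup' ⟨i, hi⟩ (u k) = u k i := by
        apply le_antisymm
        · apply sup'_le
          intro j hj
          simp only [mem_filter, mem_univ, true_and, Nat.le_zero,
            hconn.dist_eq_zero_iff] at hj
          subst hj
          exact le_refl _
        · exact le_sup' _ hi
      rw [hset]
      exact hx0 k i
    | succ ℓ ih =>
      intro hℓ k i
      have hℓ' : ℓ < Δ := hℓ
      have hstep := hx (k + ℓ + 1) i ⟨ℓ, hℓ'⟩
      have hsucc : (Fin.succ ⟨ℓ, hℓ'⟩ : Fin (Δ + 1)) = ⟨ℓ + 1, Nat.lt_succ_of_le hℓ⟩ := rfl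
      have hcast : (Fin.castSucc ⟨ℓ, hℓ'⟩ : Fin (Δ + 1)) = ⟨ℓ, Nat.lt_succ_of_le hℓ'.le⟩ := rfl
      rw [hsucc, hcast] at hstep
      have heq : k + ℓ + 1 + 1 = k + (ℓ + 1) + 1 := by omega
      rw [← heq, hstep]
      have hinner : ∀ j ∈ insert i (G.neighborFinset i),
          x (k + ℓ + 1) j ⟨ℓ, Nat.lt_succ_of_le hℓ'.le⟩ =
            (univ.filter (fun m => G.dist j m ≤ ℓ)).sup'
              ⟨j, by simp [SimpleGraph.dist_self]⟩ (u k) := by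
        intro j _
        exact ih hℓ'.le k j
      rw [sup'_congr _ rfl hinner]
      apply le_antisymm
      · apply sup'_le
        intro j hj
        apply sup'_le
        intro m hm
        simp only [mem_filter, mem_univ, true_and] at hm
        have hdij : G.dist i j ≤ 1 := by
          rcases mem_insert.mp hj with h | h
          · subst h; simp [SimpleGraph.dist_self]
          · rw [SimpleGraph.mem_neighborFinset] at h
            calc G.dist i j ≤ h.toWalk.length := SimpleGraph.dist_le _
              _ = 1 := rfl
        have : G.dist i m ≤ ℓ + 1 := by
          calc G.dist i m ≤ G.dist i j + G.dist j m := hconn.dist_triangle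
            _ ≤ 1 + ℓ := by omega
            _ = ℓ + 1 := by omega
        exact le_sup' _ (by simp [this])
      · apply sup'_le
        intro m hm
        simp only [mem_filter, mem_univ, true_and] at hm
        by_cases h0 : G.dist i m = 0
        · have : m = i := (hconn.dist_eq_zero_iff.mp h0).symm
          subst this
          exact le_sup'_of_le _ (mem_insert_self m _) (le_sup' (u k) (by simp [h0]))
        · obtain ⟨p, hp⟩ := (hconn.preconnected i m).exists_walk_length_eq_dist
          cases p with
          | nil => simp at hp; exact absurd SimpleGraph.dist_self h0
          | cons hadj q =>
            rename_i j
            have hlen : q.length + 1 = G.dist i m := by simpa using hp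
            have hjm : G.dist j m ≤ ℓ := by
              have := SimpleGraph.dist_le q
              omega
            have hjmem : j ∈ insert i (G.neighborFinset i) :=
              mem_insert_of_mem (by rwa [SimpleGraph.mem_neighborFinset])
            exact le_sup'_of_le _ hjmem (le_sup' (u k) (by simp [hjm]))
  intro k hk i
  obtain ⟨k', rfl⟩ : ∃ k', k = k' + Δ + 1 := ⟨k - Δ - 1, by omega⟩
  have hfull : (univ.filter (fun j => G.dist i j ≤ Δ)) = (univ : Finset V) := by
    ext j
    simp only [mem_filter, mem_univ, true_and, iff_true]
    calc G.dist i j ≤ δ := by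
          rw [hδ]; exact Finset.le_sup (f := fun p : V × V => G.dist p.1 p.2)
            (mem_univ (i, j))
      _ ≤ Δ := hΔ
  have hmain := key Δ le_rfl k' i
  have hsup : (univ.filter (fun j => G.dist i j ≤ Δ)).sup'
      ⟨i, by simp [SimpleGraph.dist_self]⟩ (u k') =
      (univ : Finset V).sup' univ_nonempty (u k') := by
    apply le_antisymm
    · exact sup'_le _ _ fun j _ => le_sup' _ (mem_univ j)
    · exact sup'_le _ _ fun j _ => le_sup' _ (by rw [hfull]; exact mem_univ j)
  have hidx : k' + Δ + 1 - Δ - 1 = k' := by omega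
  rw [hidx]
  exact hmain.trans hsup
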